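/- Completeness of standard SLD resolution with respect to the inductive declarative semantics: let (P,coP) be a logic program with coclauses, A a finite atom, E a finite set of equations, and σ ∈ sol(E) a ground substitution with Var(A) ⊆ dom(σ). If Aσ ∈ Ind(P ∪ coP), then there exist a finite set of equations E' and θ ∈ sol(E') such that P∪coP;∅ ⊢ ∅ : ⟨A | E⟩ ⇒ E' is derivable and σ ⊑ θ. -/

import Mathlib

/- Framework: flexible coinductive logic programming (logic programs with coclauses).
   Terms are possibly infinite trees, modelled as M-types of a polynomial functor. -/

namespace FlexLP

/-- A first-order signature: function symbols and predicate symbols, each with an arity.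
Variables are represented by natural numbers (a countably infinite set). -/
structure Sig where
  Func : Type
  far : Func → ℕ
  Pred : Type
  par : Pred → ℕ

/-- Polynomial functor whose M-type is the type of possibly infinite terms:
nodes are labelled by function symbols (with `far` children) or variables (no children). -/
def TermP (S : Sig) : PFunctor :=
  ⟨S.Func ⊕ ℕ, fun l => Fin (match l with | Sum.inl f => S.far f | Sum.inr _ => 0)⟩

/-- Possibly infinite terms over the signature `S`. -/
def Term (S : Sig) : Type := (TermP S).M

/-- The term consisting of a single variable `x`. -/
def Term.var (S : Sig) (x : ℕ) : Term S :=
  PFunctor.M.mk ⟨Sum.inr x, fun i => i.elim0⟩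

/-- The variable `x` occurs in the term `t`. -/
inductive Term.Occurs (S : Sig) (x : ℕ) : Term S → Prop
  | root (t : Term S) (h : (PFunctor.M.dest t).1 = Sum.inr x) : Term.Occurs S x t
  | child (t : Term S) (i : (TermP S).B (PFunctor.M.dest t).1)
      (h : Term.Occurs S x ((PFunctor.M.dest t).2 i)) : Term.Occurs S x t

/-- The term `t` is finite (syntactic): all its branches are finite. -/
inductive Term.IsFinite (S : Sig) : Term S → Prop
  | mk (t : Term S) (h : ∀ i, Term.IsFinite S ((PFunctor.M.dest t).2 i)) : Term.IsFinite S t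

/-- The term `t` is ground: no variable occurs in it. -/
def Term.Ground (S : Sig) (t : Term S) : Prop := ∀ x, ¬ Term.Occurs S x t

/-- A substitution: a map from a finite set of variables to terms. -/
structure Subst (S : Sig) where
  toFun : ℕ → Option (Term S)
  finDom : {x | (toFun x).isSome}.Finite

/-- Domain of a substitution. -/
def Subst.dom {S : Sig} (σ : Subst S) : Set ℕ := {x | (σ.toFun x).isSome}

/-- A substitution is ground if all its values are ground terms. -/
def Subst.Ground {S : Sig} (σ : Subst S) : Prop :=
  ∀ x t, σ.toFun x = some t → Term.Ground S t

/-- `σ ⊑ θ` : `dom σ ⊆ dom θ` and the two substitutions agree on `dom σ`. -/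
def Subst.le {S : Sig} (σ θ : Subst S) : Prop :=
  ∀ x t, σ.toFun x = some t → θ.toFun x = some t

/-- One step of (simultaneous) substitution application, as a coalgebra.
The boolean flag records whether we are still in the original term (`true`)
or inside a substituted term (`false`). -/
def substStep (S : Sig) (σ : Subst S) : Term S × Bool → (TermP S).Obj (Term S × Bool) :=
  fun p =>
    match PFunctor.M.dest p.1, p.2 with
    | ⟨Sum.inl f, ch⟩, b => ⟨Sum.inl f, fun i => (ch i, b)⟩
    | ⟨Sum.inr x, ch⟩, true =>
        match σ.toFun x with
        | some s =>
            match PFunctor.M.dest s with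
            | ⟨l, ch'⟩ => ⟨l, fun i => (ch' i, false)⟩
        | none => ⟨Sum.inr x, fun i => (ch i, true)⟩
    | ⟨Sum.inr x, ch⟩, false => ⟨Sum.inr x, fun i => (ch i, false)⟩

/-- Application `tσ` of a substitution to a term. -/
def Term.subst {S : Sig} (t : Term S) (σ : Subst S) : Term S :=
  PFunctor.M.corec (substStep S σ) (t, true)

/-- Atoms: a predicate symbol applied to terms (a possibly infinite tree whose
root is labelled by a predicate symbol). -/
structure Atom (S : Sig) where
  pred : S.Pred
  args : Fin (S.par pred) → Term S

/-- The variable `x` occurs in the atom `A`. -/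
def Atom.Occurs {S : Sig} (x : ℕ) (A : Atom S) : Prop := ∃ i, Term.Occurs S x (A.args i)

/-- Ground atoms. The set of all ground atoms is the complete Herbrand base. -/
def Atom.Ground {S : Sig} (A : Atom S) : Prop := ∀ i, Term.Ground S (A.args i)

/-- Finite (syntactic) atoms. -/
def Atom.IsFinite {S : Sig} (A : Atom S) : Prop := ∀ i, Term.IsFinite S (A.args i)

/-- Application of a substitution to an atom. -/
def Atom.subst {S : Sig} (A : Atom S) (σ : Subst S) : Atom S :=
  ⟨A.pred, fun i => Term.subst (A.args i) σ⟩

/-- A (definite) clause `head :- body`, made of finite atoms. -/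
structure Clause (S : Sig) where
  head : Atom S
  body : List (Atom S)
  finHead : head.IsFinite
  finBody : ∀ B ∈ body, B.IsFinite

/-- Variables occurring in a clause. -/
def clauseVars {S : Sig} (C : Clause S) : Set ℕ :=
  {x | Atom.Occurs x C.head ∨ ∃ B ∈ C.body, Atom.Occurs x B}

/-- `Ground P` : the ground instances of clauses of `P`, viewed as inference rules
(pairs premises/conclusion) on the complete Herbrand base. -/
def GroundInst {S : Sig} (P : Set (Clause S)) : Set (Atom S × List (Atom S)) :=
  {r | ∃ C ∈ P, ∃ σ : Subst S, σ.Ground ∧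
        r.1 = C.head.subst σ ∧ r.2 = C.body.map (fun B => B.subst σ) ∧
        r.1.Ground ∧ ∀ B ∈ r.2, B.Ground}

/-- The (one step) inference operator `T_P` associated to a program. -/
def TP {S : Sig} (P : Set (Clause S)) (I : Set (Atom S)) : Set (Atom S) :=
  {A | ∃ r ∈ GroundInst P, r.1 = A ∧ ∀ B ∈ r.2, B ∈ I}

/-- `I` is a model of `P`. -/
def IsModel {S : Sig} (P : Set (Clause S)) (I : Set (Atom S)) : Prop := TP P I ⊆ I

/-- `I` is a comodel of `P`. -/
def IsComodel {S : Sig} (P : Set (Clause S)) (I : Set (Atom S)) : Prop := I ⊆ TP P I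

/-- `Ind P` : the inductive declarative semantics, i.e. the least model of `P`. -/
def Ind {S : Sig} (P : Set (Clause S)) : Set (Atom S) := ⋂₀ {I | IsModel P I}

/-- `FlexCo (P,coP)` : the declarative semantics of a logic program with coclauses,
i.e. the largest comodel of `P` included in `Ind (P ∪ coP)` (union of all such comodels). -/
def FlexCo {S : Sig} (P coP : Set (Clause S)) : Set (Atom S) :=
  ⋃₀ {I | IsComodel P I ∧ I ⊆ Ind (P ∪ coP)}

/-- `FlexReg (P,coP)` : the regular declarative semantics, i.e. the union of all
finite comodels of `P` included in `Ind (P ∪ coP)`. -/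
def FlexReg {S : Sig} (P coP : Set (Clause S)) : Set (Atom S) :=
  ⋃₀ {I | I.Finite ∧ IsComodel P I ∧ I ⊆ Ind (P ∪ coP)}

/-- An equation `s ≐ t` between terms. -/
abbrev Eqn (S : Sig) := Term S × Term S

/-- Variables occurring in a set of equations. -/
def eqnVars {S : Sig} (E : Set (Eqn S)) : Set ℕ :=
  {x | ∃ e ∈ E, Term.Occurs S x e.1 ∨ Term.Occurs S x e.2}

/-- `E` is a finite set of equations between finite (syntactic) terms. -/
def EqnSetFin {S : Sig} (E : Set (Eqn S)) : Prop :=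
  E.Finite ∧ ∀ e ∈ E, Term.IsFinite S e.1 ∧ Term.IsFinite S e.2

/-- `sol E` : the set of solutions of `E`, i.e. ground substitutions defined on all
variables of `E` that unify all the equations in `E`. -/
def sol {S : Sig} (E : Set (Eqn S)) : Set (Subst S) :=
  {σ | σ.Ground ∧ eqnVars E ⊆ σ.dom ∧ ∀ e ∈ E, e.1.subst σ = e.2.subst σ}

/-- `E` is solvable. -/
def Solvable {S : Sig} (E : Set (Eqn S)) : Prop := (sol E).Nonempty

/-- `eqs(A,B)` : the equations between the corresponding arguments of two atoms
with the same predicate symbol. -/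
def atomEqs {S : Sig} (A B : Atom S) : Set (Eqn S) :=
  {e | ∃ (h : A.pred = B.pred) (i : Fin (S.par A.pred)),
        e = (A.args i, B.args (Fin.cast (congrArg S.par h) i))}

/-- Variables occurring in a set of atoms. -/
def atomsVars {S : Sig} (H : Set (Atom S)) : Set ℕ := {x | ∃ A ∈ H, Atom.Occurs x A}

/-- Variables occurring in a sequence of atoms (a goal). -/
def goalVars {S : Sig} (G : List (Atom S)) : Set ℕ := {x | ∃ A ∈ G, Atom.Occurs x A}

/-- `ρ` is a renaming of the variables of clause `C` to fresh variables avoiding `avoid`: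
it maps (injectively) every variable of `C` to a variable not in `avoid`. -/
def FreshRenamingFor {S : Sig} (ρ : Subst S) (C : Clause S) (avoid : Set ℕ) : Prop :=
  (∀ x t, ρ.toFun x = some t → ∃ y, t = Term.var S y ∧ y ∉ avoid) ∧
  clauseVars C ⊆ ρ.dom ∧
  (∀ x y, ρ.toFun x = ρ.toFun y → (ρ.toFun x).isSome → x = y)

/-- The big-step operational semantics judgment `P;coP ⊢ H : ⟨G | E⟩ ⇒ E'` of
flexible coSLD resolution, inductively defined by the rules (empty), (co-hyp), (step). -/
inductive OpSem (S : Sig) :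
    Set (Clause S) → Set (Clause S) → Set (Atom S) → List (Atom S) →
      Set (Eqn S) → Set (Eqn S) → Prop
  | empty (P coP : Set (Clause S)) (H : Set (Atom S)) (E : Set (Eqn S)) :
      OpSem S P coP H [] E E
  | cohyp {P coP : Set (Clause S)} {H : Set (Atom S)} {G1 G2 : List (Atom S)}
      {A B : Atom S} {E1 E2 E3 : Set (Eqn S)} :
      coP ≠ ∅ → B ∈ H → A.pred = B.pred →
      Solvable (E1 ∪ atomEqs A B) →
      OpSem S (P ∪ coP) ∅ ∅ [A] (E1 ∪ atomEqs A B) E2 →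
      OpSem S P coP H (G1 ++ G2) E2 E3 →
      OpSem S P coP H (G1 ++ A :: G2) E1 E3
  | step {P coP : Set (Clause S)} {H : Set (Atom S)} {G1 G2 : List (Atom S)}
      {A : Atom S} {E1 E2 E3 : Set (Eqn S)} (C : Clause S) (ρ : Subst S) :
      C ∈ P →
      FreshRenamingFor ρ C (eqnVars E1 ∪ atomsVars H ∪ goalVars (G1 ++ A :: G2)) →
      A.pred = C.head.pred →
      Solvable (E1 ∪ atomEqs A (C.head.subst ρ)) →
      OpSem S P coP (H ∪ {A}) (C.body.map (fun B => B.subst ρ))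
        (E1 ∪ atomEqs A (C.head.subst ρ)) E2 →
      OpSem S P coP H (G1 ++ G2) E2 E3 →
      OpSem S P coP H (G1 ++ A :: G2) E1 E3

/-- `Ans(G,E,I)` : the set of answers to the goal `⟨G | E⟩` correct in the
interpretation `I`. -/
def Ans {S : Sig} (G : List (Atom S)) (E : Set (Eqn S)) (I : Set (Atom S)) :
    Set (Subst S) :=
  {σ | σ ∈ sol E ∧ goalVars G ⊆ σ.dom ∧ ∀ A ∈ G, A.subst σ ∈ I}

/-- The inductive interpretation of the inference system `Loop(P,coP)`, whose judgments
`H ⊢ A` pair a ground atom with a set of ground atoms (circular hypotheses);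
rules: (hp) `H ⊢ A` if `A ∈ H` and `A ∈ Ind (P ∪ coP)`;
(rule) from `H∪{A} ⊢ B` for every premise `B` of a ground instance of a clause of `P`
with conclusion `A`, infer `H ⊢ A`. -/
inductive LoopInd {S : Sig} (P coP : Set (Clause S)) : Set (Atom S) → Atom S → Prop
  | hp {H : Set (Atom S)} {A : Atom S} :
      A ∈ H → A ∈ Ind (P ∪ coP) → LoopInd P coP H A
  | rule {H : Set (Atom S)} {A : Atom S} (r : Atom S × List (Atom S)) :
      r ∈ GroundInst P → r.1 = A →
      (∀ B ∈ r.2, LoopInd P coP (H ∪ {A}) B) →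
      LoopInd P coP H A

section Aux
variable {S : Sig}

theorem term_ext {a b : Term S} (h : PFunctor.M.dest a = PFunctor.M.dest b) : a = b := by
  rw [← PFunctor.M.mk_dest a, ← PFunctor.M.mk_dest b, h]

theorem dest_var (x : ℕ) :
    PFunctor.M.dest (Term.var S x) = ⟨Sum.inr x, fun i => i.elim0⟩ := rfl

theorem eq_var_of_dest_inr {t : Term S} {x : ℕ} (h : (PFunctor.M.dest t).1 = Sum.inr x) :
    t = Term.var S x := by
  apply term_ext
  rcases e : PFunctor.M.dest t with ⟨l, ch⟩
  rw [e] at h; simp only at h; subst h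
  rw [dest_var]
  congr 1
  funext i; exact i.elim0

theorem occurs_mk_iff {l : S.Func ⊕ ℕ} {ch : (TermP S).B l → Term S} {x : ℕ} :
    Term.Occurs S x (PFunctor.M.mk ⟨l, ch⟩) ↔ (l = Sum.inr x ∨ ∃ i, Term.Occurs S x (ch i)) := by
  constructor
  · intro h
    cases h with
    | root _ h => exact Or.inl h
    | child _ i h => exact Or.inr ⟨i, h⟩
  · rintro (h | ⟨i, h⟩)
    · exact .root _ h
    · exact .child _ i h

theorem occurs_var_iff {x y : ℕ} : Term.Occurs S y (Term.var S x) ↔ y = x := by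
  unfold Term.var
  refine Iff.trans occurs_mk_iff ?_
  constructor
  · rintro (h | ⟨i, _⟩)
    · exact (Sum.inr.inj h).symm
    · exact i.elim0
  · intro h; subst h; exact Or.inl rfl

/-- Induction principle for finite terms in `mk` form. -/
theorem fin_induction {motive : Term S → Prop}
    (h : ∀ (l : S.Func ⊕ ℕ) (ch : (TermP S).B l → Term S),
      (∀ i, Term.IsFinite S (ch i)) → (∀ i, motive (ch i)) →
        motive (PFunctor.M.mk ⟨l, ch⟩)) :
    ∀ t, Term.IsFinite S t → motive t := by
  intro t ht
  induction ht with
  | mk t hfin ih =>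
    rw [← PFunctor.M.mk_dest t]
    exact h (PFunctor.M.dest t).1 (PFunctor.M.dest t).2 hfin ih

end Aux
section Aux2
variable {S : Sig}

theorem subst_mk_inl (σ : Subst S) (f : S.Func) (ch : (TermP S).B (Sum.inl f) → Term S) :
    Term.subst (PFunctor.M.mk ⟨Sum.inl f, ch⟩) σ
      = PFunctor.M.mk ⟨Sum.inl f, fun i => (ch i).subst σ⟩ := by
  apply term_ext
  unfold Term.subst
  rw [PFunctor.M.dest_corec]
  simp only [substStep, PFunctor.M.dest_mk]
  rfl

theorem corec_false (σ : Subst S) (t : Term S) :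
    PFunctor.M.corec (substStep S σ) (t, false) = t := by
  refine PFunctor.M.bisim (fun a b => a = PFunctor.M.corec (substStep S σ) (b, false)) ?_
    _ _ rfl
  rintro x y rfl
  rcases e : PFunctor.M.dest y with ⟨l, ch⟩
  refine ⟨l, fun i => PFunctor.M.corec (substStep S σ) (ch i, false), ch, ?_, rfl, fun i => rfl⟩
  rw [PFunctor.M.dest_corec]
  show (TermP S).map _ (substStep S σ (y, false)) = _
  rw [substStep, e]
  cases l <;> rfl

theorem subst_var_some {σ : Subst S} {x : ℕ} {s : Term S} (h : σ.toFun x = some s) :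
    (Term.var S x).subst σ = s := by
  apply term_ext
  rw [Term.subst, PFunctor.M.dest_corec]
  show (TermP S).map _
    (match σ.toFun x with
      | some s => match PFunctor.M.dest s with | ⟨l, ch'⟩ => ⟨l, fun i => (ch' i, false)⟩
      | none => ⟨Sum.inr x, fun i => (Fin.elim0 i, true)⟩) = _
  rw [h]
  show (TermP S).map _
    (match PFunctor.M.dest s with | ⟨l, ch'⟩ => ⟨l, fun i => (ch' i, false)⟩) = _
  rcases e : PFunctor.M.dest s with ⟨l, ch⟩
  show (⟨l, fun i => PFunctor.M.corec (substStep S σ) (ch i, false)⟩ : (TermP S).Obj _) = ⟨l, ch⟩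
  congr 1
  funext i
  exact corec_false σ (ch i)

theorem subst_var_none {σ : Subst S} {x : ℕ} (h : σ.toFun x = none) :
    (Term.var S x).subst σ = Term.var S x := by
  apply term_ext
  rw [Term.subst, PFunctor.M.dest_corec]
  show (TermP S).map _
    (match σ.toFun x with
      | some s => match PFunctor.M.dest s with | ⟨l, ch'⟩ => ⟨l, fun i => (ch' i, false)⟩
      | none => ⟨Sum.inr x, fun i => (Fin.elim0 i, true)⟩) = _
  rw [h]
  show (⟨Sum.inr x, fun i => PFunctor.M.corec (substStep S σ) ((Fin.elim0 i : Term S), true)⟩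
    : (TermP S).Obj _) = _
  rw [dest_var]
  congr 1
  funext i
  exact i.elim0

end Aux2
section Aux3
variable {S : Sig}

theorem var_finite (x : ℕ) : Term.IsFinite S (Term.var S x) :=
  .mk _ (fun i => i.elim0)

theorem mk_elim0_eq_var (v : ℕ) (ch : (TermP S).B (Sum.inr v) → Term S) :
    PFunctor.M.mk ⟨Sum.inr v, ch⟩ = Term.var S v := by
  unfold Term.var
  congr 1
  congr 1
  funext i
  exact i.elim0

theorem mk_finite {f : S.Func} {ch : (TermP S).B (Sum.inl f) → Term S}
    (h : ∀ i, Term.IsFinite S (ch i)) :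
    Term.IsFinite S (PFunctor.M.mk ⟨Sum.inl f, ch⟩) :=
  .mk _ h

theorem subst_ground {σ : Subst S} {t : Term S} (hg : Term.Ground S t) : t.subst σ = t := by
  refine PFunctor.M.bisim (fun a b => ∃ u, Term.Ground S u ∧ a = u.subst σ ∧ b = u) ?_
    _ _ ⟨t, hg, rfl, rfl⟩
  rintro a u ⟨u', hgu, rfl, rfl⟩
  rcases e : PFunctor.M.dest u with ⟨l, ch⟩
  have hu : u = PFunctor.M.mk ⟨l, ch⟩ := by rw [← e, PFunctor.M.mk_dest]
  cases l with
  | inr v => exact absurd (Term.Occurs.root u (by rw [e])) (hgu v)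
  | inl f =>
      refine ⟨Sum.inl f, fun i => Term.subst (ch i) σ, ch, ?_, rfl,
        fun i => ⟨ch i, fun x hx => hgu x ?_, rfl, rfl⟩⟩
      · rw [hu]; erw [subst_mk_inl σ f ch]; rfl
      · rw [hu]; exact occurs_mk_iff.mpr (Or.inr ⟨i, hx⟩)

theorem subst_congr {σ θ : Subst S} {t : Term S} (hfin : Term.IsFinite S t)
    (hyp : ∀ x, Term.Occurs S x t → σ.toFun x = θ.toFun x) :
    t.subst σ = t.subst θ := by
  revert hyp
  refine fin_induction (motive := fun t =>
    (∀ x, Term.Occurs S x t → σ.toFun x = θ.toFun x) → t.subst σ = t.subst θ) ?_ t hfin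
  intro l ch hf ih hyp
  cases l with
  | inl f =>
      rw [subst_mk_inl, subst_mk_inl]
      have : (fun i => (ch i).subst σ) = (fun i => (ch i).subst θ) := by
        funext i
        exact ih i (fun x hx => hyp x (occurs_mk_iff.mpr (Or.inr ⟨i, hx⟩)))
      rw [this]
  | inr v =>
      rw [mk_elim0_eq_var]
      have h := hyp v (by rw [mk_elim0_eq_var]; exact occurs_var_iff.mpr rfl)
      cases e : σ.toFun v with
      | none => rw [subst_var_none e, subst_var_none (h ▸ e)]
      | some s => rw [subst_var_some e, subst_var_some (h ▸ e)]

theorem subst_finite {σ : Subst S} {t : Term S} (hfin : Term.IsFinite S t)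
    (hσ : ∀ x s, σ.toFun x = some s → Term.IsFinite S s) :
    Term.IsFinite S (t.subst σ) := by
  refine fin_induction (motive := fun t => Term.IsFinite S (t.subst σ)) ?_ t hfin
  intro l ch hf ih
  cases l with
  | inl f => rw [subst_mk_inl]; exact mk_finite ih
  | inr v =>
      rw [mk_elim0_eq_var]
      cases e : σ.toFun v with
      | none => rw [subst_var_none e]; exact var_finite v
      | some s => rw [subst_var_some e]; exact hσ v s e

theorem occurs_subst_var {ρ : Subst S} {t : Term S} (hfin : Term.IsFinite S t)
    (hρ : ∀ x s, ρ.toFun x = some s → ∃ z, s = Term.var S z) :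
    ∀ y, Term.Occurs S y (t.subst ρ) →
      (∃ x, Term.Occurs S x t ∧ ρ.toFun x = some (Term.var S y)) ∨
        (Term.Occurs S y t ∧ ρ.toFun y = none) := by
  refine fin_induction (motive := fun t => ∀ y, Term.Occurs S y (t.subst ρ) →
      (∃ x, Term.Occurs S x t ∧ ρ.toFun x = some (Term.var S y)) ∨
        (Term.Occurs S y t ∧ ρ.toFun y = none)) ?_ t hfin
  intro l ch hf ih
  cases l with
  | inl f =>
      intro y hy
      rw [subst_mk_inl] at hy
      rcases occurs_mk_iff.mp hy with h | ⟨i, h⟩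
      · exact absurd h (by simp)
      · rcases ih i y h with ⟨x, hx, hr⟩ | ⟨hx, hr⟩
        · exact Or.inl ⟨x, occurs_mk_iff.mpr (Or.inr ⟨i, hx⟩), hr⟩
        · exact Or.inr ⟨occurs_mk_iff.mpr (Or.inr ⟨i, hx⟩), hr⟩
  | inr v =>
      intro y hy
      rw [mk_elim0_eq_var] at hy ⊢
      cases e : ρ.toFun v with
      | none =>
          rw [subst_var_none e] at hy
          exact Or.inr ⟨hy, (occurs_var_iff.mp hy) ▸ e⟩
      | some s =>
          rcases hρ v s e with ⟨z, rfl⟩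
          rw [subst_var_some e] at hy
          have : y = z := occurs_var_iff.mp hy
          subst this
          exact Or.inl ⟨v, occurs_var_iff.mpr rfl, e⟩

theorem occurs_subst_of_none {σ : Subst S} {t : Term S} (hfin : Term.IsFinite S t)
    {x : ℕ} (hocc : Term.Occurs S x t) (hnone : σ.toFun x = none) :
    Term.Occurs S x (t.subst σ) := by
  revert hocc
  refine fin_induction (motive := fun t => Term.Occurs S x t → Term.Occurs S x (t.subst σ))
    ?_ t hfin
  intro l ch hf ih hocc
  cases l with
  | inl f =>
      rw [subst_mk_inl]
      rcases occurs_mk_iff.mp hocc with h | ⟨i, h⟩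
      · exact absurd h (by simp)
      · exact occurs_mk_iff.mpr (Or.inr ⟨i, ih i h⟩)
  | inr v =>
      rw [mk_elim0_eq_var] at hocc ⊢
      have : x = v := occurs_var_iff.mp hocc
      subst this
      rw [subst_var_none hnone]
      exact hocc

theorem subst_subst_ren {ρ θ σc : Subst S} {t : Term S} (hfin : Term.IsFinite S t)
    (hyp : ∀ x, Term.Occurs S x t → ∃ y s, ρ.toFun x = some (Term.var S y) ∧
      θ.toFun y = some s ∧ σc.toFun x = some s) :
    (t.subst ρ).subst θ = t.subst σc := by
  revert hyp
  refine fin_induction (motive := fun t =>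
    (∀ x, Term.Occurs S x t → ∃ y s, ρ.toFun x = some (Term.var S y) ∧
      θ.toFun y = some s ∧ σc.toFun x = some s) → (t.subst ρ).subst θ = t.subst σc) ?_ t hfin
  intro l ch hf ih hyp
  cases l with
  | inl f =>
      rw [subst_mk_inl, subst_mk_inl, subst_mk_inl]
      have : (fun i => ((ch i).subst ρ).subst θ) = (fun i => (ch i).subst σc) := by
        funext i
        exact ih i (fun x hx => hyp x (occurs_mk_iff.mpr (Or.inr ⟨i, hx⟩)))
      rw [this]
  | inr v =>
      rw [mk_elim0_eq_var]
      rcases hyp v (by rw [mk_elim0_eq_var]; exact occurs_var_iff.mpr rfl) with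
        ⟨y, s, h1, h2, h3⟩
      rw [subst_var_some h1, subst_var_some h2, subst_var_some h3]

theorem vars_finite {t : Term S} (hfin : Term.IsFinite S t) :
    Set.Finite {x | Term.Occurs S x t} := by
  refine fin_induction (motive := fun t => Set.Finite {x | Term.Occurs S x t}) ?_ t hfin
  intro l ch hf ih
  apply Set.Finite.subset (s := {x | l = Sum.inr x} ∪ ⋃ i, {x | Term.Occurs S x (ch i)})
  · apply Set.Finite.union
    · apply Set.Subsingleton.finite
      intro a ha b hb
      simp only [Set.mem_setOf_eq] at ha hb
      exact Sum.inr.inj (ha ▸ hb)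
    · haveI : Finite ((TermP S).B l) := inferInstanceAs (Finite (Fin _))
      exact Set.finite_iUnion ih
  · intro x hx
    rcases occurs_mk_iff.mp hx with h | ⟨i, h⟩
    · exact Or.inl h
    · exact Or.inr (Set.mem_iUnion.mpr ⟨i, h⟩)

end Aux3
section Aux4
variable {S : Sig}

theorem var_inj {a b : ℕ} (h : Term.var S a = Term.var S b) : a = b := by
  have := congrArg (fun t => (PFunctor.M.dest t).1) h
  simp only [dest_var] at this
  exact Sum.inr.inj this

inductive DerivN (P : Set (Clause S)) : ℕ → Atom S → Prop
  | mk (n : ℕ) (r : Atom S × List (Atom S)) (h1 : r ∈ GroundInst P)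
      (h2 : ∀ B ∈ r.2, DerivN P n B) : DerivN P (n + 1) r.1

theorem derivN_mono {P : Set (Clause S)} {n m : ℕ} {A : Atom S}
    (h : DerivN P n A) (hle : n ≤ m) : DerivN P m A := by
  induction h generalizing m with
  | mk n r h1 h2 ih =>
      obtain ⟨m', rfl⟩ : ∃ m', m = m' + 1 := ⟨m - 1, by omega⟩
      exact .mk m' r h1 (fun B hB => ih B hB (by omega))

theorem derivN_inv {P : Set (Clause S)} {n : ℕ} {A : Atom S} (h : DerivN P n A) :
    ∃ m r, m < n ∧ r ∈ GroundInst P ∧ r.1 = A ∧ ∀ B ∈ r.2, DerivN P m B := by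
  cases h with
  | mk m r h1 h2 => exact ⟨m, r, Nat.lt_succ_self m, h1, rfl, h2⟩

theorem ind_derivN {P : Set (Clause S)} {A : Atom S} (h : A ∈ Ind P) :
    ∃ n, DerivN P n A := by
  have hM : IsModel P {A | ∃ n, DerivN P n A} := by
    intro B hB
    obtain ⟨r, hr, hr1, hb⟩ := hB
    have key : ∀ l : List (Atom S), (∀ B ∈ l, ∃ n, DerivN P n B) →
        ∃ n, ∀ B ∈ l, DerivN P n B := by
      intro l hl
      induction l with
      | nil => exact ⟨0, by simp⟩
      | cons a l ih =>
          obtain ⟨n1, hn1⟩ := hl a (by simp)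
          obtain ⟨n2, hn2⟩ := ih (fun B hB => hl B (by simp [hB]))
          refine ⟨max n1 n2, ?_⟩
          intro B hB
          rcases List.mem_cons.mp hB with rfl | hB
          · exact derivN_mono hn1 (le_max_left _ _)
          · exact derivN_mono (hn2 B hB) (le_max_right _ _)
    obtain ⟨n, hn⟩ := key r.2 hb
    exact hr1 ▸ ⟨n + 1, .mk n r hr hn⟩
  exact (Set.mem_sInter.mp h) _ hM

theorem Subst.le_refl' (σ : Subst S) : σ.le σ := fun _ _ h => h

theorem Subst.le_trans' {σ θ ρ : Subst S} (h1 : σ.le θ) (h2 : θ.le ρ) : σ.le ρ :=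
  fun x t h => h2 x t (h1 x t h)

theorem dom_mono {σ θ : Subst S} (h : σ.le θ) : σ.dom ⊆ θ.dom := by
  intro x hx
  obtain ⟨t, ht⟩ := Option.isSome_iff_exists.mp hx
  exact Option.isSome_iff_exists.mpr ⟨t, h x t ht⟩

theorem subst_agree_of_le {σ θ : Subst S} {t : Term S} (hfin : Term.IsFinite S t)
    (hle : σ.le θ) (hdom : ∀ x, Term.Occurs S x t → x ∈ σ.dom) :
    t.subst θ = t.subst σ := by
  apply subst_congr hfin
  intro x hx
  obtain ⟨u, hu⟩ := Option.isSome_iff_exists.mp (hdom x hx)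
  rw [hu, hle x u hu]

theorem atom_subst_agree {σ θ : Subst S} {A : Atom S} (hfin : A.IsFinite) (hle : σ.le θ)
    (hdom : ∀ x, Atom.Occurs x A → x ∈ σ.dom) : A.subst θ = A.subst σ := by
  unfold Atom.subst
  congr 1
  funext i
  exact subst_agree_of_le (hfin i) hle (fun x hx => hdom x ⟨i, hx⟩)

theorem atom_eq_args {A B : Atom S} (h : A = B) (hp : A.pred = B.pred)
    (i : Fin (S.par A.pred)) :
    A.args i = B.args (Fin.cast (congrArg S.par hp) i) := by
  subst h
  exact congrArg A.args (Fin.ext rfl)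

theorem atomVars_finite {A : Atom S} (hA : A.IsFinite) : {x | Atom.Occurs x A}.Finite := by
  have hsub : {x | Atom.Occurs x A} ⊆ ⋃ i, {x | Term.Occurs S x (A.args i)} := by
    rintro x ⟨i, h⟩; exact Set.mem_iUnion.mpr ⟨i, h⟩
  exact Set.Finite.subset (Set.finite_iUnion fun i => vars_finite (hA i)) hsub

theorem goalVars_finite {G : List (Atom S)} (hG : ∀ A ∈ G, Atom.IsFinite A) :
    (goalVars G).Finite := by
  have hsub : goalVars G ⊆ ⋃ A ∈ {A | A ∈ G}, {x | Atom.Occurs x A} := by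
    rintro x ⟨A, hA, h⟩; exact Set.mem_biUnion hA h
  exact Set.Finite.subset
    (Set.Finite.biUnion G.finite_toSet (fun A hA => atomVars_finite (hG A hA))) hsub

theorem eqnVars_finite {E : Set (Eqn S)} (hE : EqnSetFin E) : (eqnVars E).Finite := by
  have hsub : eqnVars E ⊆
      ⋃ e ∈ E, ({x | Term.Occurs S x e.1} ∪ {x | Term.Occurs S x e.2}) := by
    rintro x ⟨e, he, h | h⟩
    · exact Set.mem_biUnion he (Or.inl h)
    · exact Set.mem_biUnion he (Or.inr h)
  refine Set.Finite.subset (Set.Finite.biUnion hE.1 ?_) hsub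
  intro e he
  exact (vars_finite (hE.2 e he).1).union (vars_finite (hE.2 e he).2)

theorem clauseVars_finite (C : Clause S) : (clauseVars C).Finite := by
  have hsub : clauseVars C ⊆
      {x | Atom.Occurs x C.head} ∪ ⋃ B ∈ {B | B ∈ C.body}, {x | Atom.Occurs x B} := by
    rintro x (h | ⟨B, hB, h⟩)
    · exact Or.inl h
    · exact Or.inr (Set.mem_biUnion hB h)
  refine Set.Finite.subset (Set.Finite.union (atomVars_finite C.finHead)
    (Set.Finite.biUnion C.body.finite_toSet (fun B hB => atomVars_finite (C.finBody B hB)))) hsub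

theorem atomEqs_finite (A B : Atom S) : (atomEqs A B).Finite := by
  by_cases h : A.pred = B.pred
  · apply Set.Finite.subset (Set.finite_range
      (fun i : Fin (S.par A.pred) => ((A.args i, B.args (Fin.cast (congrArg S.par h) i)) : Eqn S)))
    rintro e ⟨h', i, rfl⟩
    exact ⟨i, rfl⟩
  · apply Set.Finite.subset (Set.finite_empty)
    rintro e ⟨h', i, rfl⟩
    exact absurd h' h

end Aux4
section Main
variable {S : Sig}

theorem main_lemma (Pall : Set (Clause S)) :
    ∀ n : ℕ, ∀ G : List (Atom S), ∀ E : Set (Eqn S), ∀ σ : Subst S, ∀ H : Set (Atom S),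
      (∀ A ∈ G, Atom.IsFinite A) → EqnSetFin E → σ ∈ sol E →
      goalVars G ⊆ σ.dom → atomsVars H ⊆ σ.dom →
      (∀ A ∈ G, DerivN Pall n (A.subst σ)) →
      ∃ E' θ, EqnSetFin E' ∧ θ ∈ sol E' ∧ OpSem S Pall ∅ H G E E' ∧ σ.le θ := by
  intro n
  induction n using Nat.strong_induction_on with
  | _ n IHn => ?_
  intro G
  induction G with
  | nil =>
      intro E σ H _ hE hσ _ _ _
      exact ⟨E, σ, hE, hσ, .empty _ _ _ _, fun _ _ h => h⟩
  | cons A G2 IHG =>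
      intro E σ H hGfin hE hσ hgv hav hD
      classical
      have hAfin : A.IsFinite := hGfin A (by simp)
      obtain ⟨m, r, hmn, hrG, hr1, hrB⟩ := derivN_inv (hD A (by simp))
      obtain ⟨C, hC, σc, hσcGr, hhead, hbody, hg1, hg2⟩ := hrG
      have hAσ : A.subst σ = C.head.subst σc := hr1.symm.trans hhead
      have hp' := congrArg Atom.pred hAσ
      have hp : A.pred = C.head.pred := hp'
      have hσc_some : ∀ x ∈ clauseVars C, ∃ s, σc.toFun x = some s := by
        intro x hx
        rcases e : σc.toFun x with _ | s
        · exfalso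
          have hg1' : (C.head.subst σc).Ground := hhead ▸ hg1
        -- hx : Occurs head or body
          rcases hx with ⟨i, hocc⟩ | ⟨B, hB, i, hocc⟩
          · exact hg1' i x (occurs_subst_of_none (C.finHead i) hocc e)
          · have hmem : B.subst σc ∈ r.2 := by
              rw [hbody]; exact List.mem_map_of_mem hB
            exact hg2 _ hmem i x (occurs_subst_of_none (C.finBody B hB i) hocc e)
        · exact ⟨s, rfl⟩
      -- choose fresh bound N
      have hfinavoid : (σ.dom ∪ (eqnVars E ∪ goalVars (A :: G2))).Finite :=
        σ.finDom.union ((eqnVars_finite hE).union (goalVars_finite hGfin))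
      obtain ⟨b, hb⟩ := hfinavoid.bddAbove
      set N := b + 1 with hN
      have hbig : ∀ z ∈ σ.dom ∪ (eqnVars E ∪ goalVars (A :: G2)), z < N := by
        intro z hz; have := hb hz; omega
      -- fresh renaming ρ
      let ρ : Subst S := ⟨fun x => if x ∈ clauseVars C then some (Term.var S (x + N)) else none,
        by
          apply (clauseVars_finite C).subset
          intro x hx
          by_contra hxV
          simp only [Set.mem_setOf_eq, if_neg hxV, Option.isSome_none] at hx
          exact Bool.false_ne_true hx⟩
      -- extended solution θ
      let θ : Subst S := ⟨fun y =>
          if N ≤ y ∧ y - N ∈ clauseVars C then σc.toFun (y - N) else σ.toFun y,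
        by
          apply Set.Finite.subset (((clauseVars_finite C).image (· + N)).union σ.finDom)
          intro y hy
          by_cases hc : N ≤ y ∧ y - N ∈ clauseVars C
          · exact Or.inl ⟨y - N, hc.2, by show y - N + N = y; omega⟩
          · right
            simp only [Set.mem_setOf_eq, if_neg hc] at hy
            exact hy⟩
      have hρ_some : ∀ x ∈ clauseVars C, ρ.toFun x = some (Term.var S (x + N)) :=
        fun x hx => if_pos hx
      have hρ_none : ∀ x, x ∉ clauseVars C → ρ.toFun x = none := fun x hx => if_neg hx
      have hρ_var : ∀ x s, ρ.toFun x = some s → x ∈ clauseVars C ∧ s = Term.var S (x + N) := by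
        intro x s h
        by_cases hx : x ∈ clauseVars C
        · exact ⟨hx, (Option.some.inj ((hρ_some x hx).symm.trans h)).symm⟩
        · rw [hρ_none x hx] at h; cases h
      have hθ_new : ∀ x ∈ clauseVars C, θ.toFun (x + N) = σc.toFun x := by
        intro x hx
        have hc : N ≤ x + N ∧ (x + N) - N ∈ clauseVars C :=
          ⟨by omega, by simpa [Nat.add_sub_cancel] using hx⟩
        show (if N ≤ x + N ∧ (x + N) - N ∈ clauseVars C then σc.toFun ((x + N) - N)
          else σ.toFun (x + N)) = _
        rw [if_pos hc, Nat.add_sub_cancel]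
      have hθ_old : ∀ y, y < N → θ.toFun y = σ.toFun y := by
        intro y hy
        show (if N ≤ y ∧ y - N ∈ clauseVars C then σc.toFun (y - N) else σ.toFun y) = _
        rw [if_neg (fun h => absurd h.1 (by omega))]
      have hdomlt : ∀ x ∈ σ.dom, x < N := fun x hx => hbig x (Or.inl hx)
      have hleθ : σ.le θ := by
        intro x t h
        have hx : x ∈ σ.dom := Option.isSome_iff_exists.mpr ⟨t, h⟩
        rw [hθ_old x (hdomlt x hx)]; exact h
      have hθ_dom_new : ∀ x ∈ clauseVars C, (x + N) ∈ θ.dom := by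
        intro x hx
        obtain ⟨s, hs⟩ := hσc_some x hx
        exact Option.isSome_iff_exists.mpr ⟨s, (hθ_new x hx).trans hs⟩
      have hθGr : θ.Ground := by
        intro y t h
        have h' : (if N ≤ y ∧ y - N ∈ clauseVars C then σc.toFun (y - N) else σ.toFun y)
            = some t := h
        by_cases hc : N ≤ y ∧ y - N ∈ clauseVars C
        · rw [if_pos hc] at h'; exact hσcGr _ t h'
        · rw [if_neg hc] at h'; exact hσ.1 _ t h'
      have hren : ∀ x ∈ clauseVars C, ∃ y s, ρ.toFun x = some (Term.var S y) ∧
          θ.toFun y = some s ∧ σc.toFun x = some s := by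
        intro x hx
        obtain ⟨s, hs⟩ := hσc_some x hx
        exact ⟨x + N, s, hρ_some x hx, (hθ_new x hx).trans hs, hs⟩
      have hheadv : ∀ (i : Fin (S.par C.head.pred)) x, Term.Occurs S x (C.head.args i) →
          x ∈ clauseVars C := fun i x h => Or.inl ⟨i, h⟩
      have hbodyv : ∀ B ∈ C.body, ∀ x, Atom.Occurs x B → x ∈ clauseVars C :=
        fun B hB x h => Or.inr ⟨B, hB, h⟩
      have hcomp_head : ∀ i, Term.subst (Term.subst (C.head.args i) ρ) θ
          = Term.subst (C.head.args i) σc :=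
        fun i => subst_subst_ren (C.finHead i) (fun x hx => hren x (hheadv i x hx))
      have hcomp_body : ∀ B ∈ C.body, Atom.subst (B.subst ρ) θ = B.subst σc := by
        intro B hB
        show Atom.subst (Atom.subst B ρ) θ = Atom.subst B σc
        unfold Atom.subst
        congr 1
        funext i
        exact subst_subst_ren (C.finBody B hB i) (fun x hx => hren x (hbodyv B hB x ⟨i, hx⟩))
      have hρvarfin : ∀ x s, ρ.toFun x = some s → Term.IsFinite S s := by
        intro x s hxs
        obtain ⟨_, rfl⟩ := hρ_var x s hxs
        exact var_finite _
      have hB0fin : (C.head.subst ρ).IsFinite := fun i => subst_finite (C.finHead i) hρvarfin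
      have hE1fin : EqnSetFin (E ∪ atomEqs A (C.head.subst ρ)) := by
        constructor
        · exact hE.1.union (atomEqs_finite A _)
        · rintro e (he | ⟨h', i, rfl⟩)
          · exact hE.2 e he
          · exact ⟨hAfin i, hB0fin _⟩
      have hAdom : ∀ x, Atom.Occurs x A → x ∈ σ.dom := fun x hx => hgv ⟨A, by simp, hx⟩
      have hB0dom : ∀ x (i : Fin (S.par C.head.pred)),
          Term.Occurs S x (Term.subst (C.head.args i) ρ) → x ∈ θ.dom := by
        intro x i hx
        rcases occurs_subst_var (C.finHead i) (fun a s has => ⟨a + N, (hρ_var a s has).2⟩) x hx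
          with ⟨z, hz, hr⟩ | ⟨hzo, hr⟩
        · obtain ⟨hzV, heq⟩ := hρ_var z _ hr
          exact (var_inj heq) ▸ hθ_dom_new z hzV
        · exact absurd hr (by rw [hρ_some x (hheadv i x hzo)]; simp)
      have hθdom_of_σ : σ.dom ⊆ θ.dom := dom_mono hleθ
      have hθsol : θ ∈ sol (E ∪ atomEqs A (C.head.subst ρ)) := by
        refine ⟨hθGr, ?_, ?_⟩
        · rintro x ⟨e, he, hocc⟩
          rcases he with he | ⟨h', i, rfl⟩
          · exact hθdom_of_σ (hσ.2.1 ⟨e, he, hocc⟩)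
          · rcases hocc with h1 | h2
            · exact hθdom_of_σ (hAdom x ⟨i, h1⟩)
            · exact hB0dom x _ h2
        · rintro e (he | ⟨h', i, rfl⟩)
          · have h1 := subst_agree_of_le (hE.2 e he).1 hleθ
              (fun x hx => hσ.2.1 ⟨e, he, Or.inl hx⟩)
            have h2 := subst_agree_of_le (hE.2 e he).2 hleθ
              (fun x hx => hσ.2.1 ⟨e, he, Or.inr hx⟩)
            rw [h1, h2]
            exact hσ.2.2 e he
          · have hL : Term.subst (A.args i) θ = Term.subst (A.args i) σ :=
              subst_agree_of_le (hAfin i) hleθ (fun x hx => hAdom x ⟨i, hx⟩)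
            exact hL.trans ((atom_eq_args hAσ hp i).trans (hcomp_head _).symm)
      have hfresh : FreshRenamingFor ρ C
          (eqnVars E ∪ atomsVars H ∪ goalVars ([] ++ A :: G2)) := by
        refine ⟨?_, ?_, ?_⟩
        · intro x t h
          obtain ⟨hxV, rfl⟩ := hρ_var x t h
          refine ⟨x + N, rfl, ?_⟩
          intro hmem
          have hlt : x + N < N := by
            rcases hmem with (h1 | h2) | h3
            · exact hbig _ (Or.inr (Or.inl h1))
            · exact hbig _ (Or.inl (hav h2))
            · exact hbig _ (Or.inr (Or.inr h3))
          omega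
        · intro x hx
          exact Option.isSome_iff_exists.mpr ⟨_, hρ_some x hx⟩
        · intro x y hxy hx
          obtain ⟨t, ht⟩ := Option.isSome_iff_exists.mp hx
          obtain ⟨hxV, rfl⟩ := hρ_var x t ht
          obtain ⟨hyV, heq⟩ := hρ_var y _ (hxy.symm.trans ht)
          have := var_inj heq
          omega
      -- solve the body goal at level m
      have hbodyρfin : ∀ B' ∈ C.body.map (fun B => B.subst ρ), B'.IsFinite := by
        intro B' hB'
        obtain ⟨B, hB, rfl⟩ := List.mem_map.mp hB'
        exact fun i => subst_finite (C.finBody B hB i) hρvarfin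
      have hbodyρvars : goalVars (C.body.map (fun B => B.subst ρ)) ⊆ θ.dom := by
        rintro x ⟨B', hB', i, hocc⟩
        obtain ⟨B, hB, rfl⟩ := List.mem_map.mp hB'
        rcases occurs_subst_var (C.finBody B hB i) (fun a s has => ⟨a + N, (hρ_var a s has).2⟩)
          x hocc with ⟨z, hz, hr⟩ | ⟨hzo, hr⟩
        · obtain ⟨hzV, heq⟩ := hρ_var z _ hr
          exact (var_inj heq) ▸ hθ_dom_new z hzV
        · exact absurd hr (by rw [hρ_some x (hbodyv B hB x ⟨i, hzo⟩)]; simp)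
      have havA : atomsVars (H ∪ {A}) ⊆ θ.dom := by
        rintro x ⟨A', hA', hocc⟩
        rcases hA' with hA' | hA'
        · exact hθdom_of_σ (hav ⟨A', hA', hocc⟩)
        · rw [Set.mem_singleton_iff] at hA'
          subst hA'
          exact hθdom_of_σ (hAdom x hocc)
      have hbodyD : ∀ B' ∈ C.body.map (fun B => B.subst ρ), DerivN Pall m (B'.subst θ) := by
        intro B' hB'
        obtain ⟨B, hB, rfl⟩ := List.mem_map.mp hB'
        rw [hcomp_body B hB]
        apply hrB
        rw [hbody]
        exact List.mem_map_of_mem hB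
      obtain ⟨E2, θ2, hE2fin, hθ2, hOp1, hleθ2⟩ :=
        IHn m hmn (C.body.map (fun B => B.subst ρ)) (E ∪ atomEqs A (C.head.subst ρ)) θ
          (H ∪ {A}) hbodyρfin hE1fin hθsol hbodyρvars havA hbodyD
      -- solve the remaining goal G2 at level n
      have hleσθ2 : σ.le θ2 := Subst.le_trans' hleθ hleθ2
      have hG2v : goalVars G2 ⊆ σ.dom := by
        rintro x ⟨A', hA', h⟩
        exact hgv ⟨A', by simp [hA'], h⟩
      obtain ⟨E3, θ3, hE3fin, hθ3, hOp2, hleθ3⟩ :=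
        IHG E2 θ2 H (fun A' hA' => hGfin A' (by simp [hA'])) hE2fin hθ2
          (fun x hx => dom_mono hleσθ2 (hG2v hx))
          (fun x hx => dom_mono hleσθ2 (hav hx))
          (by
            intro A' hA'
            rw [atom_subst_agree (hGfin A' (by simp [hA'])) hleσθ2
              (fun x hx => hG2v ⟨A', hA', hx⟩)]
            exact hD A' (by simp [hA']))
      refine ⟨E3, θ3, hE3fin, hθ3, ?_, Subst.le_trans' hleσθ2 hleθ3⟩
      have hstep := OpSem.step (S := S) (P := Pall) (coP := ∅) (H := H) (G1 := []) (G2 := G2)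
        (A := A) (E1 := E) (E2 := E2) (E3 := E3) C ρ hC hfresh hp ⟨θ, hθsol⟩ hOp1 hOp2
      simpa using hstep

end Main
/-- Completeness of standard SLD resolution w.r.t. the inductive declarative semantics:
if `Aσ ∈ Ind(P ∪ coP)` then SLD resolution of `A` in `P ∪ coP` succeeds with an answer
extending `σ`. -/
theorem sld_completeness_wrt_inductive_semantics (S : Sig) (P coP : Set (Clause S))
    (hP : P.Finite) (hcoP : coP.Finite)
    (A : Atom S) (hAfin : A.IsFinite)
    (E : Set (Eqn S)) (hE : EqnSetFin E)
    (σ : Subst S) (hσ : σ ∈ sol E)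
    (hdom : ∀ x, Atom.Occurs x A → x ∈ σ.dom)
    (hInd : A.subst σ ∈ Ind (P ∪ coP)) :
    ∃ (E' : Set (Eqn S)) (θ : Subst S), EqnSetFin E' ∧ θ ∈ sol E' ∧
      OpSem S (P ∪ coP) ∅ ∅ [A] E E' ∧ σ.le θ := by
  obtain ⟨n, hn⟩ := ind_derivN hInd
  obtain ⟨E', θ, h1, h2, h3, h4⟩ := main_lemma (P ∪ coP) n [A] E σ ∅
    (by intro A' hA'; rw [List.mem_singleton] at hA'; subst hA'; exact hAfin)
    hE hσ
    (by rintro x ⟨A', hA', hocc⟩; rw [List.mem_singleton] at hA'; subst hA'; exact hdom x hocc)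
    (by rintro x ⟨A', hA', _⟩; exact absurd hA' (Set.notMem_empty A'))
    (by intro A' hA'; rw [List.mem_singleton] at hA'; subst hA'; exact hn)
  exact ⟨E', θ, h1, h2, h3, h4⟩

end FlexLP
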